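/- L^M(η⃗, n̄) is Schur-convex in η⃗ on [0,1]^m: if η⃗_a majorizes η⃗_b then L^M(η⃗_a, n̄) ≥ L^M(η⃗_b, n̄). -/

import Mathlib

noncomputable def g (x : ℝ) : ℝ := (1 + x) * Real.log (1 + x) - x * Real.log x

lemma g_continuous : Continuous g := by
  have h : Continuous fun x : ℝ => x * Real.log x := Real.continuous_mul_log
  have h1 : Continuous fun x : ℝ => (1 + x) * Real.log (1 + x) :=
    h.comp (continuous_const.add continuous_id)
  exact h1.sub h

lemma hasDerivAt_g {x : ℝ} (hx : 0 < x) :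
    HasDerivAt g (Real.log (1 + x) - Real.log x) x := by
  have h1 : HasDerivAt (fun y : ℝ => 1 + y) 1 x := (hasDerivAt_id x).const_add 1
  have h2 : HasDerivAt (fun y : ℝ => y * Real.log y) (Real.log (1 + x) + 1) (1 + x) :=
    Real.hasDerivAt_mul_log (by positivity)
  have h3 : HasDerivAt (fun y : ℝ => (1 + y) * Real.log (1 + y))
      ((Real.log (1 + x) + 1) * 1) x := h2.comp x h1
  have h4 : HasDerivAt (fun y : ℝ => y * Real.log y) (Real.log x + 1) x :=
    Real.hasDerivAt_mul_log hx.ne'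
  have := h3.sub h4
  refine this.congr_deriv ?_
  ring

lemma g_strictMonoOn : StrictMonoOn g (Set.Ici (0:ℝ)) := by
  apply strictMonoOn_of_deriv_pos (convex_Ici 0) g_continuous.continuousOn
  intro x hx
  rw [interior_Ici] at hx
  rw [(hasDerivAt_g hx).deriv]
  have := Real.log_lt_log hx (by linarith : x < 1 + x)
  linarith

lemma g_monotoneOn : MonotoneOn g (Set.Ici (0:ℝ)) := g_strictMonoOn.monotoneOn

lemma g_zero : g 0 = 0 := by simp [g]

lemma g_nonneg {x : ℝ} (hx : 0 ≤ x) : 0 ≤ g x := by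
  have := g_monotoneOn (Set.self_mem_Ici) (hx : x ∈ Set.Ici 0) hx
  rwa [g_zero] at this

noncomputable def G (x : ℝ) : ℝ := Real.log (1 + x) - Real.log x

lemma hasDerivAt_G {x : ℝ} (hx : 0 < x) :
    HasDerivAt G (1 / (1 + x) - 1 / x) x := by
  have h1 : HasDerivAt (fun y : ℝ => 1 + y) 1 x := (hasDerivAt_id x).const_add 1
  have h2 : HasDerivAt Real.log (1 / (1 + x)) (1 + x) := by
    have := Real.hasDerivAt_log (by positivity : (1:ℝ) + x ≠ 0)
    simpa [one_div] using this
  have h3 : HasDerivAt (fun y : ℝ => Real.log (1 + y)) (1 / (1 + x) * 1) x := h2.comp x h1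
  have h4 : HasDerivAt Real.log (1 / x) x := by
    have := Real.hasDerivAt_log hx.ne'
    simpa [one_div] using this
  have := h3.sub h4
  refine this.congr_deriv ?_
  ring

lemma G_continuousOn : ContinuousOn G (Set.Ioi (0:ℝ)) := by
  intro x hx
  have hx : (0:ℝ) < x := hx
  have h1 : ContinuousAt G x := by
    have := (hasDerivAt_G hx).continuousAt
    exact this
  exact h1.continuousWithinAt

lemma G_convexOn : ConvexOn ℝ (Set.Ioi (0:ℝ)) G := by
  apply MonotoneOn.convexOn_of_deriv (convex_Ioi 0) G_continuousOn
  · rw [interior_Ioi]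
    intro x hx
    exact (hasDerivAt_G hx).differentiableAt.differentiableWithinAt
  · rw [interior_Ioi]
    intro s hs t ht hst
    have hs : (0:ℝ) < s := hs
    have ht : (0:ℝ) < t := ht
    rw [(hasDerivAt_G hs).deriv, (hasDerivAt_G ht).deriv]
    have key : ∀ x : ℝ, 0 < x → 1 / (1 + x) - 1 / x = -(1 / (x * (1 + x))) := by
      intro x hx
      field_simp
      ring
    rw [key s hs, key t ht, neg_le_neg_iff]
    apply one_div_le_one_div_of_le (by positivity)
    nlinarith

/-- For a convex function, transfers toward the center decrease the sum of values. -/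
lemma convex_pair_ineq {G : ℝ → ℝ} {s : Set ℝ} (hG : ConvexOn ℝ s G)
    {c d x y : ℝ} (hc : c ∈ s) (hy : y ∈ s) (hcd : c ≤ d) (hdy : d ≤ y)
    (hcx : c ≤ x) (hsum : c + y = d + x) :
    G d + G x ≤ G c + G y := by
  rcases eq_or_lt_of_le (hcd.trans hdy) with h | h
  · have hdc : d = c := by linarith [hcd, hdy, h.le]
    have hxc : x = y := by linarith
    rw [hdc, hxc]
  · set l : ℝ := (y - d) / (y - c) with hl
    have hyc : (0:ℝ) < y - c := by linarith
    have hl0 : 0 ≤ l := div_nonneg (by linarith) hyc.le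
    have hl1 : l ≤ 1 := by
      rw [hl, div_le_one hyc]; linarith
    have hd : d = l * c + (1 - l) * y := by
      rw [hl]; field_simp; ring
    have hx : x = (1 - l) * c + l * y := by
      have : x = c + y - d := by linarith
      rw [this, hl]; field_simp; ring
    have h1 := hG.2 hc hy hl0 (by linarith : (0:ℝ) ≤ 1 - l) (by ring : l + (1 - l) = 1)
    have h2 := hG.2 hc hy (by linarith : (0:ℝ) ≤ 1 - l) hl0 (by ring : 1 - l + l = 1)
    simp only [smul_eq_mul] at h1 h2
    rw [← hd] at h1
    rw [← hx] at h2
    linarith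

noncomputable def L (η nbar : ℝ) : ℝ :=
  if 1 / 2 < η then g (η * nbar) - g ((1 - η) * nbar) else 0

lemma hasDerivAt_phi {n η : ℝ} (h1 : 0 < η * n) (h2 : 0 < (1 - η) * n) :
    HasDerivAt (fun η => g (η * n) - g ((1 - η) * n))
      (n * (G (η * n) + G ((1 - η) * n))) η := by
  have hA : HasDerivAt (fun η : ℝ => η * n) n η := hasDerivAt_mul_const n
  have hB : HasDerivAt (fun η : ℝ => (1 - η) * n) (-1 * n) η :=
    ((hasDerivAt_id η).const_sub 1).mul_const n
  have hgA : HasDerivAt (fun η : ℝ => g (η * n))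
      ((Real.log (1 + η * n) - Real.log (η * n)) * n) η := HasDerivAt.comp (h₂ := g) η (hasDerivAt_g h1) hA
  have hgB : HasDerivAt (fun η : ℝ => g ((1 - η) * n))
      ((Real.log (1 + (1 - η) * n) - Real.log ((1 - η) * n)) * (-1 * n)) η :=
    HasDerivAt.comp (h₂ := g) η (hasDerivAt_g h2) hB
  have := hgA.sub hgB
  refine this.congr_deriv ?_
  simp only [G]
  ring

lemma phi_continuous {n : ℝ} : Continuous (fun η : ℝ => g (η * n) - g ((1 - η) * n)) := by
  apply Continuous.sub
  · exact g_continuous.comp (continuous_id.mul continuous_const)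
  · exact g_continuous.comp ((continuous_const.sub continuous_id).mul continuous_const)

lemma phi_convexOn {n : ℝ} (hn : 0 < n) :
    ConvexOn ℝ (Set.Icc (1/2 : ℝ) 1) (fun η => g (η * n) - g ((1 - η) * n)) := by
  apply MonotoneOn.convexOn_of_deriv (convex_Icc _ _) phi_continuous.continuousOn
  · rw [interior_Icc]
    intro x hx
    obtain ⟨hx1, hx2⟩ := hx
    have h1 : 0 < x * n := by nlinarith
    have h2 : 0 < (1 - x) * n := by nlinarith
    exact (hasDerivAt_phi h1 h2).differentiableAt.differentiableWithinAt
  · rw [interior_Icc]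
    intro s hs t ht hst
    obtain ⟨hs1, hs2⟩ := hs
    obtain ⟨ht1, ht2⟩ := ht
    have hsn : 0 < s * n := by nlinarith
    have hsn' : 0 < (1 - s) * n := by nlinarith
    have htn : 0 < t * n := by nlinarith
    have htn' : 0 < (1 - t) * n := by nlinarith
    rw [(hasDerivAt_phi hsn hsn').deriv, (hasDerivAt_phi htn htn').deriv]
    have key := convex_pair_ineq G_convexOn (htn' : (1-t)*n ∈ Set.Ioi 0) (htn : t*n ∈ Set.Ioi 0)
      (by nlinarith : (1-t)*n ≤ (1-s)*n) (by nlinarith : (1-s)*n ≤ t*n)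
      (by nlinarith : (1-t)*n ≤ s*n) (by ring)
    have := mul_le_mul_of_nonneg_left
      (by linarith : G (s*n) + G ((1-s)*n) ≤ G (t*n) + G ((1-t)*n)) hn.le
    linarith

lemma L_nonneg {η n : ℝ} (hη0 : 0 ≤ η) (hη1 : η ≤ 1) (hn : 0 ≤ n) : 0 ≤ L η n := by
  unfold L
  split
  · rename_i h
    have h1 : (0:ℝ) ≤ (1 - η) * n := by nlinarith
    have h2 : (1 - η) * n ≤ η * n := by nlinarith
    have := g_monotoneOn (h1 : (1-η)*n ∈ Set.Ici 0) (h1.trans h2 : η*n ∈ Set.Ici 0) h2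
    linarith
  · exact le_refl 0

lemma L_le_g {η n N : ℝ} (hη0 : 0 ≤ η) (hη1 : η ≤ 1) (hn : 0 ≤ n) (hN : n ≤ N) :
    L η n ≤ g N := by
  have hN0 : (0:ℝ) ≤ N := hn.trans hN
  unfold L
  split
  · have h1 : (0:ℝ) ≤ η * n := by positivity
    have h2 : η * n ≤ N := by nlinarith
    have := g_monotoneOn (h1 : η*n ∈ Set.Ici 0) (hN0 : N ∈ Set.Ici 0) h2
    have h3 : (0:ℝ) ≤ g ((1 - η) * n) := g_nonneg (by nlinarith)
    linarith
  · exact g_nonneg hN0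

/-- Helper for the mixed case of convexity of `L`. -/
lemma L_convex_mixed {n x y a b : ℝ} (hn : 0 < n) (hx0 : 0 ≤ x) (hx2 : x ≤ 1/2)
    (hy2 : 1/2 < y) (hy1 : y ≤ 1) (ha : 0 ≤ a) (hb : 0 ≤ b) (hab : a + b = 1)
    (hz : 1/2 < a * x + b * y) :
    L (a * x + b * y) n ≤ a * L x n + b * L y n := by
  set z := a * x + b * y with hzdef
  have hxy : x < y := by linarith
  have hzy : z ≤ y := by nlinarith
  have hz1 : z ≤ 1 := hzy.trans hy1
  have hy12 : (0:ℝ) < y - 1/2 := by linarith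
  set t : ℝ := (z - 1/2) / (y - 1/2) with ht
  have ht0 : 0 ≤ t := div_nonneg (by linarith) hy12.le
  have ht1 : t ≤ 1 := by rw [ht, div_le_one hy12]; linarith
  have htb : t ≤ b := by
    rw [ht, div_le_iff₀ hy12]
    nlinarith
  have hconv := (phi_convexOn hn).2 (⟨le_refl _, by linarith⟩ : (1/2:ℝ) ∈ Set.Icc (1/2:ℝ) 1)
    (⟨hy2.le, hy1⟩ : y ∈ Set.Icc (1/2:ℝ) 1) (by linarith : (0:ℝ) ≤ 1 - t) ht0
    (by ring : 1 - t + t = 1)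
  simp only [smul_eq_mul] at hconv
  have hmul : t * (y - 1/2) = z - 1/2 := div_mul_cancel₀ _ (ne_of_gt hy12)
  have hzc : (1 - t) * (1/2) + t * y = z := by linear_combination hmul
  rw [hzc] at hconv
  have hphihalf : g ((1/2 : ℝ) * n) - g ((1 - 1/2) * n) = 0 := by norm_num
  have hLz : L z n = g (z * n) - g ((1 - z) * n) := if_pos hz
  have hLy : L y n = g (y * n) - g ((1 - y) * n) := if_pos hy2
  have hLx : L x n = 0 := if_neg (by linarith)
  have hphiy : 0 ≤ g (y * n) - g ((1 - y) * n) := by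
    have := L_nonneg (by linarith : (0:ℝ) ≤ y) hy1 hn.le
    rwa [hLy] at this
  rw [hLx, hLy, hLz]
  have h1 : g (z * n) - g ((1 - z) * n) ≤ t * (g (y * n) - g ((1 - y) * n)) := by
    rw [hphihalf] at hconv
    linarith
  have h2 : t * (g (y * n) - g ((1 - y) * n)) ≤ b * (g (y * n) - g ((1 - y) * n)) :=
    mul_le_mul_of_nonneg_right htb hphiy
  linarith

lemma L_convexOn {n : ℝ} (hn : 0 ≤ n) : ConvexOn ℝ (Set.Icc (0:ℝ) 1) (fun η => L η n) := by
  rcases eq_or_lt_of_le hn with h0 | hn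
  · have : (fun η : ℝ => L η n) = fun _ => (0:ℝ) := by
      funext η
      unfold L
      split <;> simp [← h0, g_zero]
    rw [this]
    exact convexOn_const 0 (convex_Icc _ _)
  constructor
  · exact convex_Icc _ _
  intro x hx y hy a b ha hb hab
  simp only [smul_eq_mul]
  obtain ⟨hx0, hx1⟩ := hx
  obtain ⟨hy0, hy1⟩ := hy
  by_cases hz : 1/2 < a * x + b * y
  · by_cases hxc : 1/2 < x
    · by_cases hyc : 1/2 < y
      · -- both in (1/2, 1]
        have hconv := (phi_convexOn hn).2 (⟨hxc.le, hx1⟩ : x ∈ Set.Icc (1/2:ℝ) 1)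
          (⟨hyc.le, hy1⟩ : y ∈ Set.Icc (1/2:ℝ) 1) ha hb hab
        simp only [smul_eq_mul] at hconv
        rw [show L (a*x+b*y) n = g ((a*x+b*y) * n) - g ((1 - (a*x+b*y)) * n) from if_pos hz,
          show L x n = g (x * n) - g ((1 - x) * n) from if_pos hxc,
          show L y n = g (y * n) - g ((1 - y) * n) from if_pos hyc]
        exact hconv
      · -- y ≤ 1/2 < x : symmetric mixed case
        have := L_convex_mixed hn hy0 (by linarith) hxc hx1 hb ha (by linarith)
          (by linarith [hz] : 1/2 < b * y + a * x)
        calc L (a*x+b*y) n = L (b*y+a*x) n := by ring_nf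
          _ ≤ b * L y n + a * L x n := this
          _ = a * L x n + b * L y n := by ring
    · -- x ≤ 1/2, so y > 1/2 (since z > 1/2)
      have hyc : 1/2 < y := by nlinarith
      exact L_convex_mixed hn hx0 (by linarith) hyc hy1 ha hb hab hz
  · rw [show L (a*x+b*y) n = 0 from if_neg hz]
    have h1 := L_nonneg hx0 hx1 hn.le
    have h2 := L_nonneg hy0 hy1 hn.le
    nlinarith

noncomputable def LM (m : ℕ) (η : Fin m → ℝ) (nbar : ℝ) : ℝ :=
  sSup {s : ℝ | ∃ n : Fin m → ℝ, (∀ i, 0 ≤ n i) ∧ (∑ i, n i) = nbar ∧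
    s = ∑ i, L (η i) (n i)}

def Sset (m : ℕ) (η : Fin m → ℝ) (nbar : ℝ) : Set ℝ :=
  {s : ℝ | ∃ n : Fin m → ℝ, (∀ i, 0 ≤ n i) ∧ (∑ i, n i) = nbar ∧
    s = ∑ i, L (η i) (n i)}

lemma LM_eq_sSup (m : ℕ) (η : Fin m → ℝ) (nbar : ℝ) : LM m η nbar = sSup (Sset m η nbar) := rfl

lemma Sset_nonempty {m : ℕ} (hm : 0 < m) (η : Fin m → ℝ) {nbar : ℝ} (hn : 0 ≤ nbar) :
    (Sset m η nbar).Nonempty := by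
  refine ⟨∑ i, L (η i) (nbar / m), fun _ => nbar / m, fun i => by positivity, ?_, rfl⟩
  rw [Finset.sum_const, Finset.card_univ, Fintype.card_fin, nsmul_eq_mul]
  field_simp

lemma Sset_bddAbove {m : ℕ} {η : Fin m → ℝ} {nbar : ℝ} (hn : 0 ≤ nbar)
    (hη : η ∈ Set.Icc (0 : Fin m → ℝ) 1) : BddAbove (Sset m η nbar) := by
  refine ⟨m * g nbar, ?_⟩
  rintro s ⟨n, hpos, hsum, rfl⟩
  have hbd : ∀ i, L (η i) (n i) ≤ g nbar := by
    intro i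
    have hni : n i ≤ nbar := by
      rw [← hsum]
      exact Finset.single_le_sum (fun j _ => hpos j) (Finset.mem_univ i)
    exact L_le_g (hη.1 i) (hη.2 i) (hpos i) hni
  calc ∑ i, L (η i) (n i) ≤ ∑ _i : Fin m, g nbar := Finset.sum_le_sum (fun i _ => hbd i)
    _ = m * g nbar := by rw [Finset.sum_const, Finset.card_univ, Fintype.card_fin, nsmul_eq_mul]

lemma Sset_comp_subset {m : ℕ} (η : Fin m → ℝ) (σ : Equiv.Perm (Fin m)) (nbar : ℝ) :
    Sset m η nbar ⊆ Sset m (η ∘ σ) nbar := by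
  rintro s ⟨n, hpos, hsum, rfl⟩
  refine ⟨n ∘ σ, fun i => hpos _, ?_, ?_⟩
  · rw [← hsum]
    exact Equiv.sum_comp σ n
  · exact (Equiv.sum_comp σ (fun i => L (η i) (n i))).symm

lemma Sset_comp {m : ℕ} (η : Fin m → ℝ) (σ : Equiv.Perm (Fin m)) (nbar : ℝ) :
    Sset m (η ∘ σ) nbar = Sset m η nbar := by
  apply le_antisymm
  · have := Sset_comp_subset (η ∘ σ) σ⁻¹ nbar
    have hcomp : (η ∘ σ) ∘ (σ⁻¹ : Equiv.Perm (Fin m)) = η := by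
      funext i; simp
    rwa [hcomp] at this
  · exact Sset_comp_subset η σ nbar

lemma LM_comp_perm {m : ℕ} (η : Fin m → ℝ) (σ : Equiv.Perm (Fin m)) (nbar : ℝ) :
    LM m (η ∘ σ) nbar = LM m η nbar := by
  rw [LM_eq_sSup, LM_eq_sSup, Sset_comp]

lemma LM_convex_ineq {m : ℕ} (hm : 0 < m) {nbar : ℝ} (hn : 0 < nbar)
    {x y : Fin m → ℝ} (hx : x ∈ Set.Icc (0 : Fin m → ℝ) 1) (hy : y ∈ Set.Icc (0 : Fin m → ℝ) 1)
    {a b : ℝ} (ha : 0 ≤ a) (hb : 0 ≤ b) (hab : a + b = 1) :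
    LM m (a • x + b • y) nbar ≤ a * LM m x nbar + b * LM m y nbar := by
  rw [LM_eq_sSup, LM_eq_sSup, LM_eq_sSup]
  apply csSup_le (Sset_nonempty hm _ hn.le)
  rintro s ⟨n, hpos, hsum, rfl⟩
  have hpt : ∀ i, L ((a • x + b • y) i) (n i) ≤ a * L (x i) (n i) + b * L (y i) (n i) := by
    intro i
    have := (L_convexOn (hpos i)).2 (⟨hx.1 i, hx.2 i⟩ : x i ∈ Set.Icc (0:ℝ) 1)
      (⟨hy.1 i, hy.2 i⟩ : y i ∈ Set.Icc (0:ℝ) 1) ha hb hab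
    simpa using this
  have hxs : (∑ i, L (x i) (n i)) ∈ Sset m x nbar := ⟨n, hpos, hsum, rfl⟩
  have hys : (∑ i, L (y i) (n i)) ∈ Sset m y nbar := ⟨n, hpos, hsum, rfl⟩
  have h1 : ∑ i, L (x i) (n i) ≤ sSup (Sset m x nbar) :=
    le_csSup (Sset_bddAbove hn.le hx) hxs
  have h2 : ∑ i, L (y i) (n i) ≤ sSup (Sset m y nbar) :=
    le_csSup (Sset_bddAbove hn.le hy) hys
  calc ∑ i, L ((a • x + b • y) i) (n i)
      ≤ ∑ i, (a * L (x i) (n i) + b * L (y i) (n i)) := Finset.sum_le_sum (fun i _ => hpt i)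
    _ = a * ∑ i, L (x i) (n i) + b * ∑ i, L (y i) (n i) := by
        rw [Finset.sum_add_distrib, Finset.mul_sum, Finset.mul_sum]
    _ ≤ a * sSup (Sset m x nbar) + b * sSup (Sset m y nbar) := by
        have := mul_le_mul_of_nonneg_left h1 ha
        have := mul_le_mul_of_nonneg_left h2 hb
        linarith

/-- Suffix sum: sum of entries at positions `≥ t`. -/
def Tsum (m : ℕ) (a : Fin m → ℝ) (t : ℕ) : ℝ :=
  ∑ i ∈ Finset.univ.filter (fun i : Fin m => t ≤ (i : ℕ)), a i

lemma Tsum_zero (m : ℕ) (a : Fin m → ℝ) : Tsum m a 0 = ∑ i, a i := by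
  unfold Tsum
  congr 1
  simp [Finset.filter_true_of_mem]

lemma Tsum_top (m : ℕ) (a : Fin m → ℝ) {t : ℕ} (ht : m < t) : Tsum m a t = 0 := by
  unfold Tsum
  rw [Finset.filter_false_of_mem, Finset.sum_empty]
  intro i _
  have := i.isLt
  omega

lemma Tsum_succ {m : ℕ} (c : Fin m → ℝ) (j : Fin m) :
    Tsum m c ↑j = c j + Tsum m c (↑j + 1) := by
  unfold Tsum
  have hset : Finset.univ.filter (fun k : Fin m => (j:ℕ) ≤ (k:ℕ)) =
      insert j (Finset.univ.filter (fun k : Fin m => (j:ℕ) + 1 ≤ (k:ℕ))) := by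
    ext k
    simp only [Finset.mem_filter, Finset.mem_insert, Finset.mem_univ, true_and]
    constructor
    · intro h
      rcases eq_or_lt_of_le h with h' | h'
      · left; exact (Fin.ext h'.symm)
      · right; omega
    · rintro (rfl | h)
      · exact le_refl _
      · omega
  rw [hset, Finset.sum_insert]
  simp only [Finset.mem_filter, Finset.mem_univ, true_and]
  omega

lemma Tsum_sub (m : ℕ) (a b : Fin m → ℝ) (t : ℕ) :
    Tsum m a t - Tsum m b t = ∑ i ∈ Finset.univ.filter (fun i : Fin m => t ≤ (i : ℕ)), (a i - b i) := by
  unfold Tsum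
  rw [Finset.sum_sub_distrib]

lemma schur_core {m : ℕ} (f : (Fin m → ℝ) → ℝ)
    (hsym : ∀ (η : Fin m → ℝ) (σ : Equiv.Perm (Fin m)), f (η ∘ σ) = f η)
    (hconv : ∀ x y : Fin m → ℝ, x ∈ Set.Icc (0 : Fin m → ℝ) 1 → y ∈ Set.Icc (0 : Fin m → ℝ) 1 →
      ∀ c d : ℝ, 0 ≤ c → 0 ≤ d → c + d = 1 → f (c • x + d • y) ≤ c * f x + d * f y) :
    ∀ N : ℕ, ∀ a b : Fin m → ℝ, Monotone a → Monotone b →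
      a ∈ Set.Icc (0 : Fin m → ℝ) 1 → b ∈ Set.Icc (0 : Fin m → ℝ) 1 →
      (∀ t : ℕ, Tsum m b t ≤ Tsum m a t) → (∑ i, a i) = (∑ i, b i) →
      (Finset.univ.filter (fun i => a i ≠ b i)).card ≤ N → f b ≤ f a := by
  intro N
  induction N with
  | zero =>
    intro a b _ _ _ _ _ _ hcard
    have hemp : (Finset.univ.filter (fun i => a i ≠ b i)) = ∅ :=
      Finset.card_eq_zero.mp (Nat.le_zero.mp hcard)
    have hab : a = b := by
      funext k
      by_contra h
      have hk : k ∈ Finset.univ.filter (fun i => a i ≠ b i) := by simp [h]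
      rw [hemp] at hk
      exact absurd hk (Finset.notMem_empty k)
    rw [hab]
  | succ N ih =>
    intro a b hma hmb hboxa hboxb hT hsum hcard
    by_cases habe : a = b
    · rw [habe]
    have hA0 : ∀ k, (0:ℝ) ≤ a k := fun k => Pi.le_def.mp (Set.mem_Icc.mp hboxa).1 k
    have hA1 : ∀ k, a k ≤ 1 := fun k => Pi.le_def.mp (Set.mem_Icc.mp hboxa).2 k
    have hB0 : ∀ k, (0:ℝ) ≤ b k := fun k => Pi.le_def.mp (Set.mem_Icc.mp hboxb).1 k
    have hB1 : ∀ k, b k ≤ 1 := fun k => Pi.le_def.mp (Set.mem_Icc.mp hboxb).2 k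
    -- there is an index where b < a
    have hex : ∃ j, b j < a j := by
      by_contra h
      push_neg at h
      apply habe
      funext k
      exact (Finset.sum_eq_sum_iff_of_le (fun i _ => h i)).mp hsum (k) (Finset.mem_univ k)
    classical
    set J := Finset.univ.filter (fun j => b j < a j) with hJ
    have hJne : J.Nonempty := by
      obtain ⟨j, hj⟩ := hex
      exact ⟨j, Finset.mem_filter.mpr ⟨Finset.mem_univ _, hj⟩⟩
    set j := J.min' hJne with hjdef
    have hj : b j < a j := by
      have := J.min'_mem hJne
      simp only [hJ, Finset.mem_filter, Finset.mem_univ, true_and] at this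
      exact this
    have hjmin : ∀ k : Fin m, b k < a k → j ≤ k := fun k hk =>
      J.min'_le k (Finset.mem_filter.mpr ⟨Finset.mem_univ _, hk⟩)
    have hlt_le : ∀ k : Fin m, (k:ℕ) < (j:ℕ) → a k ≤ b k := by
      intro k hk
      by_contra h
      push_neg at h
      have h2 := hjmin k h
      rw [Fin.le_def] at h2
      omega
    have hgesplit : Tsum m a ↑j - Tsum m b ↑j ≥ a j - b j := by
      rw [Tsum_succ a j, Tsum_succ b j]
      have := hT ((j:ℕ) + 1)
      linarith
    have hlow : ∑ k ∈ Finset.univ.filter (fun k : Fin m => ¬ ((j:ℕ) ≤ (k:ℕ))), (a k - b k) < 0 := by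
      have hpart := Finset.sum_filter_add_sum_filter_not Finset.univ
        (fun k : Fin m => ((j:ℕ) ≤ (k:ℕ))) (fun k => a k - b k)
      have htot : ∑ k, (a k - b k) = 0 := by rw [Finset.sum_sub_distrib, hsum]; ring
      have h1 : ∑ k ∈ Finset.univ.filter (fun k : Fin m => ((j:ℕ) ≤ (k:ℕ))), (a k - b k) =
          Tsum m a ↑j - Tsum m b ↑j := (Tsum_sub m a b ↑j).symm
      linarith
    have hexi : ∃ i : Fin m, (i:ℕ) < (j:ℕ) ∧ a i < b i := by
      by_contra h
      push_neg at h
      have hnn : ∀ k ∈ Finset.univ.filter (fun k : Fin m => ¬ ((j:ℕ) ≤ (k:ℕ))), 0 ≤ a k - b k := by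
        intro k hk
        simp only [Finset.mem_filter, Finset.mem_univ, true_and, not_le] at hk
        have := h k hk
        linarith
      have := Finset.sum_nonneg hnn
      linarith
    set I := Finset.univ.filter (fun i : Fin m => (i:ℕ) < (j:ℕ) ∧ a i < b i) with hI
    have hIne : I.Nonempty := by
      obtain ⟨i, h1, h2⟩ := hexi
      exact ⟨i, Finset.mem_filter.mpr ⟨Finset.mem_univ _, h1, h2⟩⟩
    set i := I.max' hIne with hidef
    have hi : (i:ℕ) < (j:ℕ) ∧ a i < b i := by
      have := I.max'_mem hIne
      simpa only [hI, Finset.mem_filter, Finset.mem_univ, true_and] using this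
    have himax : ∀ k : Fin m, (k:ℕ) < (j:ℕ) → a k < b k → k ≤ i :=
      fun k h1 h2 => I.le_max' k (Finset.mem_filter.mpr ⟨Finset.mem_univ _, h1, h2⟩)
    have hmid : ∀ k : Fin m, (i:ℕ) < (k:ℕ) → (k:ℕ) < (j:ℕ) → a k = b k := by
      intro k h1 h2
      have hle := hlt_le k h2
      rcases eq_or_lt_of_le hle with h | h
      · exact h
      · have h3 := himax k h2 h
        rw [Fin.le_def] at h3
        omega
    have hijv : (i:ℕ) < (j:ℕ) := hi.1
    have hij : i ≠ j := by intro h; rw [h] at hijv; omega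
    have hijlt : i < j := by rw [Fin.lt_def]; exact hijv
    have hbibj : b i ≤ b j := hmb hijlt.le
    have haiaj : a i < a j := by linarith [hi.2, hj]
    set δ := min (a j - b j) (b i - a i) with hδdef
    have hδ : 0 < δ := lt_min (by linarith) (by linarith [hi.2])
    have hδ1 : δ ≤ a j - b j := min_le_left _ _
    have hδ2 : δ ≤ b i - a i := min_le_right _ _
    set a' : Fin m → ℝ := Function.update (Function.update a i (a i + δ)) j (a j - δ) with ha'
    have ha'e : ∀ k, a' k = if k = j then a j - δ else if k = i then a i + δ else a k := by
      intro k
      rw [ha', Function.update_apply, Function.update_apply]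
    have ha'i : a' i = a i + δ := by rw [ha'e]; simp [hij]
    have ha'j : a' j = a j - δ := by rw [ha'e]; simp
    have ha'other : ∀ k, k ≠ i → k ≠ j → a' k = a k := by
      intro k h1 h2; rw [ha'e]; simp [h1, h2]
    -- monotonicity of a'
    have hma' : Monotone a' := by
      intro k l hkl
      rw [ha'e k, ha'e l]
      rcases eq_or_ne k j with rfl | hkj
      · rcases eq_or_ne l j with rfl | hlj
        · simp
        · have hjl : j < l := lt_of_le_of_ne hkl (fun h => hlj h.symm)
          have hli : l ≠ i := by
            intro h
            rw [h] at hjl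
            exact absurd hijlt.le (not_le.mpr hjl)
          rw [if_pos rfl, if_neg hlj, if_neg hli]
          have := hma hjl.le
          linarith
      · rcases eq_or_ne k i with rfl | hki
        · rcases eq_or_ne l j with rfl | hlj
          · rw [if_neg hkj, if_pos rfl, if_pos rfl]
            linarith
          · rcases eq_or_ne l i with rfl | hli
            · exact le_rfl
            · have hil : i < l := lt_of_le_of_ne hkl (fun h => hli h.symm)
              rw [if_neg hkj, if_pos rfl, if_neg hlj, if_neg hli]
              by_cases hlj2 : (l:ℕ) < (j:ℕ)
              · have hal : a l = b l := hmid l (Fin.lt_def.mp hil) hlj2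
                have hbl : b i ≤ b l := hmb hil.le
                linarith
              · have h5 : (j:ℕ) ≤ (l:ℕ) := by omega
                have hal : a j ≤ a l := hma (Fin.le_def.mpr h5)
                linarith
        · rcases eq_or_ne l j with rfl | hlj
          · have hkj2 : (k:ℕ) < (j:ℕ) := Fin.lt_def.mp (lt_of_le_of_ne hkl hkj)
            rw [if_neg hkj, if_neg hki, if_pos rfl]
            by_cases hik : (i:ℕ) < (k:ℕ)
            · have h1 : a k = b k := hmid k hik hkj2
              have h2 : b k ≤ b j := hmb (Fin.le_def.mpr (by omega))
              linarith
            · have hk_le_i : k ≤ i := Fin.le_def.mpr (by omega)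
              have h1 := hma hk_le_i
              linarith [hi.2]
          · rcases eq_or_ne l i with rfl | hli
            · rw [if_neg hkj, if_neg hki, if_neg hij, if_pos rfl]
              have := hma hkl
              linarith
            · rw [if_neg hkj, if_neg hki, if_neg hlj, if_neg hli]
              exact hma hkl
    -- box membership of a'
    have hboxa' : a' ∈ Set.Icc (0 : Fin m → ℝ) 1 := by
      refine Set.mem_Icc.mpr ⟨Pi.le_def.mpr fun k => ?_, Pi.le_def.mpr fun k => ?_⟩ <;>
        simp only [Pi.zero_apply, Pi.one_apply] <;> rw [ha'e k]
      · split_ifs with h1 h2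
        · linarith [hB0 j]
        · linarith [hA0 i]
        · exact hA0 k
      · split_ifs with h1 h2
        · linarith [hA1 j]
        · linarith [hB1 i]
        · exact hA1 k
    -- suffix-sum difference formula
    have hdiff : ∀ k, a' k - a k = (if k = i then δ else 0) + (if k = j then -δ else 0) := by
      intro k
      rw [ha'e k]
      rcases eq_or_ne k j with rfl | h1
      · rw [if_pos rfl, if_neg hij.symm, if_pos rfl]; ring
      · rw [if_neg h1, if_neg h1]
        rcases eq_or_ne k i with rfl | h2
        · rw [if_pos rfl, if_pos rfl]; ring
        · rw [if_neg h2, if_neg h2]; ring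
    have hTdiff : ∀ t, Tsum m a' t =
        Tsum m a t + (if t ≤ (i:ℕ) then δ else 0) + (if t ≤ (j:ℕ) then -δ else 0) := by
      intro t
      have h1 := Tsum_sub m a' a t
      rw [Finset.sum_congr rfl (fun k _ => hdiff k), Finset.sum_add_distrib,
        Finset.sum_ite_eq' _ i (fun _ => δ), Finset.sum_ite_eq' _ j (fun _ => -δ)] at h1
      simp only [Finset.mem_filter, Finset.mem_univ, true_and] at h1
      linarith
    have hT' : ∀ t, Tsum m b t ≤ Tsum m a' t := by
      intro t
      rw [hTdiff t]
      by_cases h1 : t ≤ (i:ℕ)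
      · have h2 : t ≤ (j:ℕ) := by omega
        rw [if_pos h1, if_pos h2]
        have := hT t
        linarith
      · by_cases h2 : t ≤ (j:ℕ)
        · rw [if_neg h1, if_pos h2]
          set M := Finset.univ.filter (fun k : Fin m => t ≤ (k:ℕ) ∧ (k:ℕ) ≤ (j:ℕ)) with hM
          have hsplitset : Finset.univ.filter (fun k : Fin m => t ≤ (k:ℕ)) =
              M ∪ Finset.univ.filter (fun k : Fin m => (j:ℕ)+1 ≤ (k:ℕ)) := by
            ext k
            simp only [hM, Finset.mem_filter, Finset.mem_univ, true_and, Finset.mem_union]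
            omega
          have hdisj : Disjoint M (Finset.univ.filter (fun k : Fin m => (j:ℕ)+1 ≤ (k:ℕ))) := by
            rw [Finset.disjoint_left]
            intro k hk1 hk2
            simp only [hM, Finset.mem_filter, Finset.mem_univ, true_and] at hk1 hk2
            omega
          have hsplit : ∀ c : Fin m → ℝ, Tsum m c t = (∑ k ∈ M, c k) + Tsum m c ((j:ℕ)+1) := by
            intro c
            unfold Tsum
            rw [hsplitset, Finset.sum_union hdisj]
          have hMsum : ∑ k ∈ M, (a k - b k) = a j - b j := by
            apply Finset.sum_eq_single_of_mem j
            · simp only [hM, Finset.mem_filter, Finset.mem_univ, true_and]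
              omega
            · intro k hk hkj
              simp only [hM, Finset.mem_filter, Finset.mem_univ, true_and] at hk
              have hkjv : (k:ℕ) ≠ (j:ℕ) := fun h => hkj (Fin.ext h)
              have hik : (i:ℕ) < (k:ℕ) := by omega
              rw [hmid k hik (by omega)]
              ring
          have h3 := hT ((j:ℕ)+1)
          have h4 : Tsum m a t - Tsum m b t =
              (a j - b j) + (Tsum m a ((j:ℕ)+1) - Tsum m b ((j:ℕ)+1)) := by
            rw [hsplit a, hsplit b]
            have h5 : (∑ k ∈ M, a k) - (∑ k ∈ M, b k) = a j - b j := by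
              rw [← Finset.sum_sub_distrib, hMsum]
            linarith
          linarith
        · rw [if_neg h1, if_neg h2]
          have := hT t
          linarith
    have hsum' : (∑ k, a' k) = ∑ k, b k := by
      have h0 := hTdiff 0
      rw [if_pos (Nat.zero_le _), if_pos (Nat.zero_le _), Tsum_zero, Tsum_zero] at h0
      rw [h0]
      linarith [hsum]
    -- cardinality decreases
    have hii : a i ≠ b i := ne_of_lt hi.2
    have hjj : a j ≠ b j := ne_of_gt hj
    obtain ⟨e, hea, heb⟩ : ∃ e : Fin m, a' e = b e ∧ (e = i ∨ e = j) := by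
      rcases min_cases (a j - b j) (b i - a i) with ⟨heq, _⟩ | ⟨heq, _⟩
      · exact ⟨j, by rw [ha'j, hδdef, heq]; ring, Or.inr rfl⟩
      · exact ⟨i, by rw [ha'i, hδdef, heq]; ring, Or.inl rfl⟩
    have hsubset : Finset.univ.filter (fun k => a' k ≠ b k) ⊆
        (Finset.univ.filter (fun k => a k ≠ b k)).erase e := by
      intro k hk
      simp only [Finset.mem_filter, Finset.mem_univ, true_and] at hk
      rw [Finset.mem_erase]
      constructor
      · intro h; rw [h] at hk; exact hk hea
      · simp only [Finset.mem_filter, Finset.mem_univ, true_and]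
        rcases eq_or_ne k i with rfl | h1
        · exact hii
        · rcases eq_or_ne k j with rfl | h2
          · exact hjj
          · rw [← ha'other k h1 h2]; exact hk
    have hcard' : (Finset.univ.filter (fun k => a' k ≠ b k)).card ≤ N := by
      have h1 := Finset.card_le_card hsubset
      have h2 : e ∈ Finset.univ.filter (fun k => a k ≠ b k) := by
        simp only [Finset.mem_filter, Finset.mem_univ, true_and]
        rcases heb with rfl | rfl
        · exact hii
        · exact hjj
      have h3 := Finset.card_erase_of_mem h2
      have h4 := Finset.card_pos.mpr ⟨e, h2⟩
      omega
    -- f a' ≤ f a via convexity and symmetry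
    have hfa' : f a' ≤ f a := by
      set sw := Equiv.swap i j with hsw
      have hswi : sw i = j := Equiv.swap_apply_left i j
      have hswj : sw j = i := Equiv.swap_apply_right i j
      have hswo : ∀ k, k ≠ i → k ≠ j → sw k = k := fun k h1 h2 =>
        Equiv.swap_apply_of_ne_of_ne h1 h2
      have hdpos : 0 < a j - a i := by linarith
      set d : ℝ := δ / (a j - a i) with hd
      have hd0 : 0 ≤ d := div_nonneg hδ.le hdpos.le
      have hd1 : d ≤ 1 := by
        rw [hd, div_le_one hdpos]
        linarith [hi.2]
      have hdm : d * (a j - a i) = δ := div_mul_cancel₀ _ (ne_of_gt hdpos)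
      have heq : a' = (1 - d) • a + d • (a ∘ sw) := by
        funext k
        simp only [Pi.add_apply, Pi.smul_apply, Function.comp_apply, smul_eq_mul]
        rw [ha'e k]
        rcases eq_or_ne k j with rfl | h1
        · rw [if_pos rfl, hswj]; linear_combination hdm
        · rw [if_neg h1]
          rcases eq_or_ne k i with rfl | h2
          · rw [if_pos rfl, hswi]; linear_combination -hdm
          · rw [if_neg h2, hswo k h2 h1]; ring
      have hwbox : (a ∘ sw) ∈ Set.Icc (0 : Fin m → ℝ) 1 := by
        refine Set.mem_Icc.mpr ⟨Pi.le_def.mpr fun k => ?_, Pi.le_def.mpr fun k => ?_⟩ <;>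
          simp only [Pi.zero_apply, Pi.one_apply, Function.comp_apply]
        · exact hA0 (sw k)
        · exact hA1 (sw k)
      calc f a' = f ((1 - d) • a + d • (a ∘ sw)) := by rw [heq]
        _ ≤ (1 - d) * f a + d * f (a ∘ sw) :=
            hconv a (a ∘ sw) hboxa hwbox (1 - d) d (by linarith) hd0 (by ring)
        _ = f a := by rw [hsym a sw]; ring
    exact le_trans (ih a' b hma' hmb hboxa' hboxb hT' hsum' hcard') hfa'

/-- Sum of the `k` largest entries of `a` (via a sorting permutation: `a ∘ Tuple.sort a` is
nondecreasing, so the `k` largest entries are those at the last `k` positions). -/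
noncomputable def topSum (m : ℕ) (a : Fin m → ℝ) (k : ℕ) : ℝ :=
  ∑ i ∈ Finset.univ.filter (fun i : Fin m => m - k ≤ (i : ℕ)), a (Tuple.sort a i)

/-- `a` majorizes `b`: each partial sum of the largest entries of `a` dominates that of `b`,
with equal total sums. -/
def Majorizes (m : ℕ) (a b : Fin m → ℝ) : Prop :=
  (∀ k ≤ m, topSum m b k ≤ topSum m a k) ∧ (∑ i, a i) = ∑ i, b i

lemma topSum_eq_Tsum (m : ℕ) (a : Fin m → ℝ) (k : ℕ) :
    topSum m a k = Tsum m (a ∘ Tuple.sort a) (m - k) := rfl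

theorem LM_schur_convex (m : ℕ) (nbar : ℝ) (hn : 0 < nbar)
    (ηa ηb : Fin m → ℝ) (ha : ηa ∈ Set.Icc (0 : Fin m → ℝ) 1)
    (hb : ηb ∈ Set.Icc (0 : Fin m → ℝ) 1)
    (hmaj : Majorizes m ηa ηb) :
    LM m ηb nbar ≤ LM m ηa nbar := by
  rcases Nat.eq_zero_or_pos m with hm | hm
  · subst hm
    have he : ∀ η : Fin 0 → ℝ, LM 0 η nbar = 0 := by
      intro η
      rw [LM_eq_sSup]
      have hemp : Sset 0 η nbar = ∅ := by
        rw [Set.eq_empty_iff_forall_notMem]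
        rintro s ⟨n, _, hsum, _⟩
        rw [Finset.univ_eq_empty, Finset.sum_empty] at hsum
        linarith
      rw [hemp, Real.sSup_empty]
    rw [he ηb, he ηa]
  · set σa := Tuple.sort ηa with hσa
    set σb := Tuple.sort ηb with hσb
    set a := ηa ∘ σa with hadef
    set b := ηb ∘ σb with hbdef
    have hma : Monotone a := Tuple.monotone_sort ηa
    have hmb : Monotone b := Tuple.monotone_sort ηb
    have hboxa : a ∈ Set.Icc (0 : Fin m → ℝ) 1 := by
      refine Set.mem_Icc.mpr ⟨Pi.le_def.mpr fun k => ?_, Pi.le_def.mpr fun k => ?_⟩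
      · exact Pi.le_def.mp (Set.mem_Icc.mp ha).1 (σa k)
      · exact Pi.le_def.mp (Set.mem_Icc.mp ha).2 (σa k)
    have hboxb : b ∈ Set.Icc (0 : Fin m → ℝ) 1 := by
      refine Set.mem_Icc.mpr ⟨Pi.le_def.mpr fun k => ?_, Pi.le_def.mpr fun k => ?_⟩
      · exact Pi.le_def.mp (Set.mem_Icc.mp hb).1 (σb k)
      · exact Pi.le_def.mp (Set.mem_Icc.mp hb).2 (σb k)
    have hTc : ∀ t, Tsum m b t ≤ Tsum m a t := by
      intro t
      by_cases ht : t ≤ m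
      · have h1 := hmaj.1 (m - t) (Nat.sub_le m t)
        have h2 : m - (m - t) = t := by omega
        rw [topSum_eq_Tsum, topSum_eq_Tsum, h2] at h1
        exact h1
      · rw [Tsum_top m a (by omega), Tsum_top m b (by omega)]
    have hsc : (∑ i, a i) = ∑ i, b i := by
      rw [hadef, hbdef]
      rw [show (∑ i, (ηa ∘ σa) i) = ∑ i, ηa i from Equiv.sum_comp σa ηa,
          show (∑ i, (ηb ∘ σb) i) = ∑ i, ηb i from Equiv.sum_comp σb ηb]
      exact hmaj.2
    have hcard : (Finset.univ.filter (fun i => a i ≠ b i)).card ≤ m := by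
      calc (Finset.univ.filter (fun i => a i ≠ b i)).card
          ≤ Finset.univ.card := Finset.card_filter_le _ _
        _ = m := by rw [Finset.card_univ, Fintype.card_fin]
    have hcore := schur_core (fun η => LM m η nbar)
      (fun η σ => LM_comp_perm η σ nbar)
      (fun x y hx hy c d hc hd hcd => LM_convex_ineq hm hn hx hy hc hd hcd)
      m a b hma hmb hboxa hboxb hTc hsc hcard
    rw [LM_comp_perm ηb σb nbar, LM_comp_perm ηa σa nbar] at hcore
    exact hcore
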